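/- arXiv:cs/0411007 — 3 statements merged into one kernel-verified Lean document; each statement's English description precedes it below -/
import Mathlib

section
/- The space of one-dimensional sandpile configurations equipped with the sandpile metric d is a complete metric space: every Cauchy sequence of configurations converges to a configuration. -/
/-- The extended integers `ℤ ∪ {-∞, +∞}`. -/
abbrev EZ : Type := WithBot (WithTop ℤ)

/-- Embedding of `ℤ` into the extended integers. -/
def finVal (n : ℤ) : EZ := ((n : WithTop ℤ) : EZ)

/-- The integer value of a finite extended integer (`0` on `±∞`). -/
def valZ (x : EZ) : ℤ := WithBot.recBotCoe 0 (fun y => WithTop.recTopCoe 0 id y) x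

/-- The measuring device `β_l^m`. -/
noncomputable def beta (l : ℕ) (m : ℤ) (n : EZ) : EZ :=
  if finVal (m + (l : ℤ)) < n then ⊤
  else if n < finVal (m - (l : ℤ)) then ⊥
  else WithBot.map (WithTop.map (fun k => k - m)) n

/-- Reference height: the value of `x` if finite, `0` if `x = ±∞`. -/
def refH (x : EZ) : ℤ := if x = ⊥ ∨ x = ⊤ then 0 else valZ x

/-- One-dimensional sandpile configurations. -/
abbrev Config : Type := ℤ → EZ

/-- The neighborhood sequence `d_r^i(c)`: the `2r`-tuple of measured differences. -/
noncomputable def nbhd (r : ℕ) (c : Config) (i : ℤ) : Fin (2 * r) → EZ :=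
  fun j => beta r (refH (c i))
    (c (i + (if (j : ℕ) < r then ((j : ℕ) : ℤ) - (r : ℤ) else ((j : ℕ) : ℤ) - (r : ℤ) + 1)))

/-- The global function of the sand automaton of radius `r` with local rule `lam`. -/
noncomputable def globalF (r : ℕ) (lam : (Fin (2 * r) → EZ) → ℤ) (c : Config) : Config :=
  fun i => if c i = ⊥ ∨ c i = ⊤ then c i
    else finVal (valZ (c i) + lam (nbhd r c i))

/-- Finite configurations. -/
def FiniteConf (c : Config) : Prop := ∃ k : ℕ, ∀ i : ℤ, (k : ℤ) ≤ |i| → c i = finVal 0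

/-- Periodic configurations. -/
def PeriodicConf (c : Config) : Prop := ∃ p : ℤ, p ≠ 0 ∧ ∀ i : ℤ, c (i + p) = c i


/-- An encoding of the tuple `d_l^0(x)` as a function on `ℤ` (positions outside the
measured window are sent to the default value `⊥`, and for `l = 0` every position
carries the single entry `x 0`); two configurations `x, y` satisfy
`d_l^0(x) = d_l^0(y)` exactly when `dAt l x = dAt l y`. -/
noncomputable def dAt (l : ℕ) (x : Config) : ℤ → EZ :=
  fun j =>
    if l = 0 then x 0
    else if j ≠ 0 ∧ |j| ≤ (l : ℤ) then beta l (refH (x 0)) (x j) else ⊥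

open Classical in
/-- The sandpile distance: `d(x, y) = 2^{-l}` where `l` is the smallest integer with
`d_l^0(x) ≠ d_l^0(y)`, and `d(x, y) = 0` if `x = y`. -/
noncomputable def sdist (x y : Config) : ℝ :=
  if x = y then 0 else (2 : ℝ)⁻¹ ^ sInf {l : ℕ | dAt l x ≠ dAt l y}


section Helpers

lemma finVal_lt_finVal {a b : ℤ} : finVal a < finVal b ↔ a < b := by
  rw [finVal, finVal, WithBot.coe_lt_coe, WithTop.coe_lt_coe]

lemma finVal_le_finVal {a b : ℤ} : finVal a ≤ finVal b ↔ a ≤ b := by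
  rw [finVal, finVal, WithBot.coe_le_coe, WithTop.coe_le_coe]

lemma finVal_lt_top (a : ℤ) : finVal a < (⊤:EZ) := by
  rw [show (⊤:EZ) = ((⊤ : WithTop ℤ) : EZ) from rfl, finVal, WithBot.coe_lt_coe]
  exact WithTop.coe_lt_top a

lemma bot_lt_finVal (a : ℤ) : (⊥:EZ) < finVal a := WithBot.bot_lt_coe _
lemma finVal_ne_top (a : ℤ) : finVal a ≠ (⊤:EZ) := (finVal_lt_top a).ne
lemma finVal_ne_bot (a : ℤ) : finVal a ≠ (⊥:EZ) := (bot_lt_finVal a).ne'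

lemma finVal_inj {a b : ℤ} : finVal a = finVal b ↔ a = b := by
  rw [finVal, finVal, WithBot.coe_inj, WithTop.coe_inj]

lemma EZ_cases (x : EZ) : x = ⊥ ∨ x = ⊤ ∨ ∃ k : ℤ, x = finVal k := by
  induction x using WithBot.recBotCoe with
  | bot => exact Or.inl rfl
  | coe y => induction y using WithTop.recTopCoe with
    | top => exact Or.inr (Or.inl rfl)
    | coe k => exact Or.inr (Or.inr ⟨k, rfl⟩)

lemma bot_ne_topEZ : (⊥ : EZ) ≠ ⊤ := by
  rw [show (⊤:EZ) = ((⊤ : WithTop ℤ) : EZ) from rfl]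
  exact (WithBot.bot_lt_coe _).ne

lemma beta_bot (l : ℕ) (m : ℤ) : beta l m ⊥ = ⊥ := by
  rw [beta, if_neg (by exact fun h => absurd h (by simp)), if_pos (bot_lt_finVal _)]

lemma beta_top (l : ℕ) (m : ℤ) : beta l m ⊤ = ⊤ := by
  rw [beta, if_pos (finVal_lt_top _)]

lemma beta_coe (l : ℕ) (m k : ℤ) : beta l m (finVal k) =
    if m + l < k then ⊤ else if k < m - l then ⊥ else finVal (k - m) := by
  rw [beta]
  by_cases h1 : m + l < k
  · rw [if_pos (finVal_lt_finVal.2 h1), if_pos h1]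
  · rw [if_neg (fun h => h1 (finVal_lt_finVal.1 h)), if_neg h1]
    by_cases h2 : k < m - l
    · rw [if_pos (finVal_lt_finVal.2 h2), if_pos h2]
    · rw [if_neg (fun h => h2 (finVal_lt_finVal.1 h)), if_neg h2]
      rfl

lemma beta_eq_top_iff {l : ℕ} {m : ℤ} {a : EZ} : beta l m a = ⊤ ↔ finVal (m + l) < a := by
  rcases EZ_cases a with h | h | ⟨k, h⟩ <;> subst h
  · simp only [beta_bot]
    exact ⟨fun h => absurd h bot_ne_topEZ, fun h => absurd h (not_lt_bot)⟩
  · simp only [beta_top, finVal_lt_top, iff_true]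
  · rw [beta_coe, finVal_lt_finVal]
    by_cases h1 : m + l < k
    · simp [h1]
    · rw [if_neg h1]
      simp only [h1, iff_false]
      by_cases h2 : k < m - l
      · rw [if_pos h2]; exact bot_ne_topEZ
      · rw [if_neg h2]; exact finVal_ne_top _

lemma beta_eq_bot_iff {l : ℕ} {m : ℤ} {a : EZ} : beta l m a = ⊥ ↔ a < finVal (m - l) := by
  rcases EZ_cases a with h | h | ⟨k, h⟩ <;> subst h
  · simp only [beta_bot, bot_lt_finVal, iff_true]
  · simp only [beta_top]
    constructor
    · intro h; exact absurd h.symm bot_ne_topEZ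
    · intro h; exact absurd h (not_top_lt)
  · rw [beta_coe, finVal_lt_finVal]
    by_cases h1 : m + l < k
    · rw [if_pos h1]
      constructor
      · intro h; exact absurd h.symm bot_ne_topEZ
      · intro h; omega
    · rw [if_neg h1]
      by_cases h2 : k < m - l
      · simp [h2]
      · rw [if_neg h2]
        simp only [h2, iff_false]
        exact finVal_ne_bot _

lemma beta_fin {l : ℕ} {m : ℤ} {a : EZ} (hb : beta l m a ≠ ⊥) (ht : beta l m a ≠ ⊤) :
    ∃ k : ℤ, a = finVal k ∧ beta l m a = finVal (k - m) := by
  rcases EZ_cases a with h | h | ⟨k, h⟩ <;> subst h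
  · exact absurd (beta_bot l m) hb
  · exact absurd (beta_top l m) ht
  · refine ⟨k, rfl, ?_⟩
    rw [beta_coe] at hb ht ⊢
    by_cases h1 : m + l < k
    · rw [if_pos h1] at ht; exact absurd rfl ht
    · rw [if_neg h1] at hb ⊢
      by_cases h2 : k < m - l
      · rw [if_pos h2] at hb; exact absurd rfl hb
      · rw [if_neg h2]

lemma beta_inj {m : ℤ} {L0 : ℕ} {a b : EZ}
    (h : ∀ l : ℕ, L0 ≤ l → beta l m a = beta l m b) : a = b := by
  rcases EZ_cases a with ha | ha | ⟨j, ha⟩ <;> rcases EZ_cases b with hb | hb | ⟨k, hb⟩ <;>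
      subst ha <;> subst hb
  · rfl
  · exact absurd ((beta_bot L0 m).symm.trans ((h L0 le_rfl).trans (beta_top L0 m))) bot_ne_topEZ
  · set l := max L0 (m - k).toNat with hl
    have h2 := (h l (le_max_left _ _)).symm.trans (beta_bot l m)
    rw [beta_eq_bot_iff, finVal_lt_finVal] at h2
    omega
  · exact absurd (((beta_top L0 m).symm.trans (h L0 le_rfl)).trans (beta_bot L0 m)).symm bot_ne_topEZ
  · rfl
  · set l := max L0 (k - m).toNat with hl
    have h2 := (h l (le_max_left _ _)).symm.trans (beta_top l m)
    rw [beta_eq_top_iff, finVal_lt_finVal] at h2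
    omega
  · set l := max L0 (m - j).toNat with hl
    have h2 := (h l (le_max_left _ _)).trans (beta_bot l m)
    rw [beta_eq_bot_iff, finVal_lt_finVal] at h2
    omega
  · set l := max L0 (j - m).toNat with hl
    have h2 := (h l (le_max_left _ _)).trans (beta_top l m)
    rw [beta_eq_top_iff, finVal_lt_finVal] at h2
    omega
  · set l := max L0 (max (j - m).natAbs (k - m).natAbs) with hl
    have h2 := h l (le_max_left _ _)
    rw [beta_coe, beta_coe] at h2
    have hj1 : ¬ (m + l < j) := by omega
    have hj2 : ¬ (j < m - l) := by omega
    have hk1 : ¬ (m + l < k) := by omega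
    have hk2 : ¬ (k < m - l) := by omega
    rw [if_neg hj1, if_neg hj2, if_neg hk1, if_neg hk2, finVal_inj] at h2
    rw [finVal_inj]
    omega

lemma dAt_zero (x : Config) (j : ℤ) : dAt 0 x j = x 0 := by simp [dAt]

lemma dAt_apply {l : ℕ} (x : Config) {j : ℤ} (hl : l ≠ 0) (hj : j ≠ 0)
    (hjl : |j| ≤ (l:ℤ)) : dAt l x j = beta l (refH (x 0)) (x j) := by
  simp only [dAt]
  rw [if_neg hl, if_pos ⟨hj, hjl⟩]

lemma dAt_out {l : ℕ} (x : Config) {j : ℤ} (hl : l ≠ 0)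
    (hw : ¬ (j ≠ 0 ∧ |j| ≤ (l:ℤ))) : dAt l x j = ⊥ := by
  simp only [dAt]
  rw [if_neg hl, if_neg hw]

lemma abs_le_of_natAbs_le {j : ℤ} {l : ℕ} (h : j.natAbs ≤ l) : |j| ≤ (l:ℤ) := by
  rw [Int.abs_eq_natAbs]; exact_mod_cast h

lemma allEq {x y : Config} (h : ∀ l, dAt l x = dAt l y) : x = y := by
  have h00 : x 0 = y 0 := by
    have := congrFun (h 0) 0
    simpa [dAt] using this
  funext j
  by_cases hj : j = 0
  · subst hj; exact h00
  · apply beta_inj (m := refH (x 0)) (L0 := max j.natAbs 1)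
    intro l hl
    have hl0 : l ≠ 0 := by omega
    have hjl : |j| ≤ (l:ℤ) := abs_le_of_natAbs_le (le_trans (le_max_left _ _) hl)
    have hd := congrFun (h l) j
    rw [dAt_apply x hl0 hj hjl, dAt_apply y hl0 hj hjl, ← h00] at hd
    exact hd

end Helpers

/-- The space of one-dimensional sandpile configurations with the sandpile metric is
complete: every Cauchy sequence of configurations converges to a configuration. -/
theorem config_space_complete (u : ℕ → Config)
    (hCauchy : ∀ ε : ℝ, 0 < ε →
      ∃ N : ℕ, ∀ m n : ℕ, N ≤ m → N ≤ n → sdist (u m) (u n) < ε) :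
    ∃ c : Config, ∀ ε : ℝ, 0 < ε → ∃ N : ℕ, ∀ n : ℕ, N ≤ n → sdist (u n) c < ε := by
  classical
  have key : ∀ L : ℕ, ∃ N : ℕ, ∀ m n : ℕ, N ≤ m → N ≤ n → ∀ l, l ≤ L →
      dAt l (u m) = dAt l (u n) := by
    intro L
    obtain ⟨N, hN⟩ := hCauchy ((2:ℝ)⁻¹ ^ L) (by positivity)
    refine ⟨N, fun m n hm hn l hl => ?_⟩
    by_contra hne
    have hd := hN m n hm hn
    have hmn : u m ≠ u n := by intro he; rw [he] at hne; exact hne rfl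
    rw [sdist, if_neg hmn] at hd
    have h1 : sInf {l' | dAt l' (u m) ≠ dAt l' (u n)} ≤ L := le_trans (Nat.sInf_le hne) hl
    have h2 : (2:ℝ)⁻¹ ^ L ≤ (2:ℝ)⁻¹ ^ sInf {l' | dAt l' (u m) ≠ dAt l' (u n)} :=
      pow_le_pow_of_le_one (by norm_num) (by norm_num) h1
    linarith
  choose N hN using key
  set m0 := refH (u (N 0) 0) with hm0
  have h0 : ∀ n, N 0 ≤ n → u n 0 = u (N 0) 0 := by
    intro n hn
    have := congrFun (hN 0 n (N 0) hn le_rfl 0 le_rfl) 0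
    simpa [dAt] using this
  have hstab : ∀ (j : ℤ), j ≠ 0 → ∀ l : ℕ, max j.natAbs 1 ≤ l →
      ∀ n, max (N l) (N 0) ≤ n →
      beta l m0 (u n j) = beta l m0 (u (max (N l) (N 0)) j) := by
    intro j hj l hl n hn
    have h1 : N l ≤ n := le_trans (le_max_left _ _) hn
    have hd := congrFun (hN l n (max (N l) (N 0)) h1 (le_max_left _ _) l le_rfl) j
    have hl0 : l ≠ 0 := by omega
    have hjl : |j| ≤ (l:ℤ) := abs_le_of_natAbs_le (le_trans (le_max_left _ _) hl)
    rw [dAt_apply _ hl0 hj hjl, dAt_apply _ hl0 hj hjl,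
      h0 n (le_trans (le_max_right _ _) hn), h0 (max (N l) (N 0)) (le_max_right _ _),
      ← hm0] at hd
    exact hd
  have hQ : ∀ j : ℤ, ∃ v : EZ, ∀ l : ℕ, ∃ N' : ℕ, ∀ n, N' ≤ n →
      beta l m0 (u n j) = beta l m0 v := by
    intro j
    by_cases hj : j = 0
    · subst hj
      exact ⟨u (N 0) 0, fun l => ⟨N 0, fun n hn => by rw [h0 n hn]⟩⟩
    · set L0 := max j.natAbs 1 with hL0
      set n0 : ℕ → ℕ := fun l => max (N l) (N 0) with hn0def
      by_cases hfin : ∃ l, L0 ≤ l ∧ beta l m0 (u (n0 l) j) ≠ ⊥ ∧ beta l m0 (u (n0 l) j) ≠ ⊤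
      · obtain ⟨l, hl, hb, ht⟩ := hfin
        refine ⟨u (n0 l) j, fun l' => ⟨n0 l, fun n hn => ?_⟩⟩
        have heq : u n j = u (n0 l) j := by
          have hs := hstab j hj l hl n hn
          obtain ⟨k, hk, hbk⟩ := beta_fin hb ht
          have hb2 : beta l m0 (u n j) ≠ ⊥ := by rw [hs]; exact hb
          have ht2 : beta l m0 (u n j) ≠ ⊤ := by rw [hs]; exact ht
          obtain ⟨k', hk', hbk'⟩ := beta_fin hb2 ht2
          rw [hk, hk', finVal_inj]
          have hkk : finVal (k' - m0) = finVal (k - m0) := by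
            rw [← hbk', ← hbk]; exact hs
          rw [finVal_inj] at hkk
          omega
        rw [heq]
      · push_neg at hfin
        by_cases htop : ∃ l, L0 ≤ l ∧ beta l m0 (u (n0 l) j) = ⊤
        · obtain ⟨l, hl, hbl⟩ := htop
          refine ⟨⊤, fun l' => ⟨n0 (max l' l), fun n hn => ?_⟩⟩
          set l'' := max l' l with hl''def
          have hl''L0 : L0 ≤ l'' := le_trans hl (le_max_right _ _)
          have hb'' : beta l'' m0 (u (n0 l'') j) = ⊤ := by
            by_cases hbb : beta l'' m0 (u (n0 l'') j) = ⊥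
            · exfalso
              set n' := max (n0 l) (n0 l'') with hn'def
              have e1 : beta l m0 (u n' j) = ⊤ := by
                rw [hstab j hj l hl n' (le_max_left _ _)]; exact hbl
              have e2 : beta l'' m0 (u n' j) = ⊥ := by
                rw [hstab j hj l'' hl''L0 n' (le_max_right _ _)]; exact hbb
              rw [beta_eq_top_iff] at e1
              rw [beta_eq_bot_iff] at e2
              have h3 : finVal (m0 + l) < finVal (m0 - l'') := lt_trans e1 e2
              rw [finVal_lt_finVal] at h3
              omega
            · exact hfin l'' hl''L0 hbb
          have hs := hstab j hj l'' hl''L0 n hn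
          have h4 : beta l'' m0 (u n j) = ⊤ := hs.trans hb''
          rw [beta_eq_top_iff] at h4
          rw [beta_top, beta_eq_top_iff]
          refine lt_of_le_of_lt (finVal_le_finVal.2 ?_) h4
          have : l' ≤ l'' := le_max_left _ _
          omega
        · push_neg at htop
          refine ⟨⊥, fun l' => ⟨n0 (max l' L0), fun n hn => ?_⟩⟩
          set l'' := max l' L0 with hl''def
          have hl''L0 : L0 ≤ l'' := le_max_right _ _
          have hb'' : beta l'' m0 (u (n0 l'') j) = ⊥ := by
            by_contra hbb
            exact htop l'' hl''L0 (hfin l'' hl''L0 hbb)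
          have hs := hstab j hj l'' hl''L0 n hn
          have h4 : beta l'' m0 (u n j) = ⊥ := hs.trans hb''
          rw [beta_eq_bot_iff] at h4
          rw [beta_bot, beta_eq_bot_iff]
          refine lt_of_lt_of_le h4 (finVal_le_finVal.2 ?_)
          have : l' ≤ l'' := le_max_left _ _
          omega
  choose c hc using hQ
  choose M hM using hc
  have hc0 : c 0 = u (N 0) 0 := by
    apply beta_inj (m := m0) (L0 := 0)
    intro l _
    have e := hM 0 l (max (M 0 l) (N 0)) (le_max_left _ _)
    rw [h0 _ (le_max_right _ _)] at e
    exact e.symm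
  have hrefc : refH (c 0) = m0 := by rw [hc0, ← hm0]
  refine ⟨c, ?_⟩
  intro ε hε
  obtain ⟨L, hL⟩ := exists_pow_lt_of_lt_one hε (by norm_num : (2:ℝ)⁻¹ < 1)
  refine ⟨max (N L) (N 0), fun n hn => ?_⟩
  have hall : ∀ l, l ≤ L → dAt l (u n) = dAt l c := by
    intro l hl
    funext j
    by_cases hl0 : l = 0
    · subst hl0
      rw [dAt_zero, dAt_zero, h0 n (le_trans (le_max_right _ _) hn), hc0]
    by_cases hw : j ≠ 0 ∧ |j| ≤ (l:ℤ)
    · obtain ⟨hj, hjl⟩ := hw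
      rw [dAt_apply _ hl0 hj hjl, dAt_apply _ hl0 hj hjl,
        h0 n (le_trans (le_max_right _ _) hn), ← hm0, hrefc]
      set n' := max (M j l) (max (N L) (N 0)) with hn'def
      have hd := congrFun (hN L n n' (le_trans (le_max_left _ _) hn)
        (le_trans (le_max_left _ _) (le_max_right _ _)) l hl) j
      rw [dAt_apply _ hl0 hj hjl, dAt_apply _ hl0 hj hjl,
        h0 n (le_trans (le_max_right _ _) hn),
        h0 n' (le_trans (le_max_right _ _) (le_max_right _ _)), ← hm0] at hd
      rw [hd, hM j l n' (le_max_left _ _)]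
    · rw [dAt_out _ hl0 hw, dAt_out _ hl0 hw]
  by_cases heq : u n = c
  · rw [sdist, if_pos heq]
    exact hε
  · rw [sdist, if_neg heq]
    have hSne : {l | dAt l (u n) ≠ dAt l c}.Nonempty := by
      rcases Set.eq_empty_or_nonempty {l | dAt l (u n) ≠ dAt l c} with he | hne
      · exfalso
        apply heq
        apply allEq
        intro l
        by_contra hll
        have : l ∈ {l | dAt l (u n) ≠ dAt l c} := hll
        rw [he] at this
        exact this
      · exact hne
    have hmem := Nat.sInf_mem hSne
    have hgt : L < sInf {l | dAt l (u n) ≠ dAt l c} := by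
      by_contra hle
      push_neg at hle
      exact hmem (hall _ hle)
    calc (2:ℝ)⁻¹ ^ sInf {l | dAt l (u n) ≠ dAt l c}
        ≤ (2:ℝ)⁻¹ ^ L := pow_le_pow_of_le_one (by norm_num) (by norm_num) hgt.le
      _ < ε := hL
end

section
/- The global function f_{S^r} of the sand automaton S^r is injective on all configurations, F-injective (injective on finite configurations), and P-injective (injective on periodic configurations). -/
/-- The local rule of the sand automaton `S^r`:
`λ_{S^r}(x,y) = -1` if `x = +∞ ∧ y ≠ -∞`, `+1` if `x ≠ +∞ ∧ y = -∞`, `0` otherwise. -/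
def lamSr (v : Fin 2 → EZ) : ℤ :=
  if v 0 = ⊤ ∧ v 1 ≠ ⊥ then -1
  else if v 0 ≠ ⊤ ∧ v 1 = ⊥ then 1
  else 0

namespace SrAux

lemma finVal_lt {a b : ℤ} : finVal a < finVal b ↔ a < b := by simp [finVal]
lemma finVal_le {a b : ℤ} : finVal a ≤ finVal b ↔ a ≤ b := by simp [finVal]
lemma finVal_inj {a b : ℤ} : finVal a = finVal b ↔ a = b := by simp [finVal]
lemma finVal_ne_bot (a : ℤ) : finVal a ≠ ⊥ := by simp [finVal]
lemma finVal_ne_top (a : ℤ) : finVal a ≠ ⊤ :=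
  fun h => WithTop.coe_ne_top (WithBot.coe_injective h)
lemma finVal_lt_top (a : ℤ) : finVal a < ⊤ := lt_top_iff_ne_top.2 (finVal_ne_top a)
lemma bot_lt_finVal (a : ℤ) : (⊥:EZ) < finVal a := bot_lt_iff_ne_bot.2 (finVal_ne_bot a)
lemma valZ_finVal (a : ℤ) : valZ (finVal a) = a := rfl

lemma exists_finVal {x : EZ} (hb : x ≠ ⊥) (ht : x ≠ ⊤) : ∃ k, x = finVal k := by
  induction x using WithBot.recBotCoe with
  | bot => simp at hb
  | coe a =>
    induction a using WithTop.recTopCoe with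
    | top => exact absurd rfl ht
    | coe k => exact ⟨k, rfl⟩

lemma finVal_lt_iff {a : ℤ} {x : EZ} : finVal a < x ↔ finVal (a+1) ≤ x := by
  induction x using WithBot.recBotCoe with
  | bot =>
    exact iff_of_false (by simp) (fun hle => finVal_ne_bot _ (le_bot_iff.1 hle))
  | coe y =>
    induction y using WithTop.recTopCoe with
    | top => exact iff_of_true (finVal_lt_top a) le_top
    | coe k =>
      show finVal a < finVal k ↔ finVal (a+1) ≤ finVal k
      rw [finVal_lt, finVal_le]; omega

lemma lt_finVal_iff {a : ℤ} {x : EZ} : x < finVal a ↔ x ≤ finVal (a-1) := by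
  induction x using WithBot.recBotCoe with
  | bot => exact iff_of_true (bot_lt_finVal a) bot_le
  | coe y =>
    induction y using WithTop.recTopCoe with
    | top =>
      exact iff_of_false (not_lt.2 (le_of_lt (finVal_lt_top a)))
        (fun hle => finVal_ne_top _ (top_le_iff.1 hle))
    | coe k =>
      show finVal k < finVal a ↔ finVal k ≤ finVal (a-1)
      rw [finVal_lt, finVal_le]; omega

lemma map_finVal (m a : ℤ) :
    WithBot.map (WithTop.map (fun k => k - m)) (finVal a) = finVal (a - m) := rfl

lemma beta_eq_top {n : ℤ} {x : EZ} : beta 1 n x = ⊤ ↔ finVal (n+1) < x := by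
  unfold beta
  push_cast
  split_ifs with h1 h2
  · simp [h1]
  · constructor
    · intro h; exact absurd h bot_ne_top
    · intro h; exact absurd h h1
  · constructor
    · intro hm
      obtain ⟨k, rfl⟩ := exists_finVal (x := x)
        (fun hb => h2 (by rw [hb]; exact bot_lt_finVal _))
        (fun ht => h1 (by rw [ht]; exact finVal_lt_top _))
      rw [map_finVal] at hm
      exact absurd hm (finVal_ne_top _)
    · intro h; exact absurd h h1

lemma beta_eq_bot {n : ℤ} {x : EZ} : beta 1 n x = ⊥ ↔ x < finVal (n-1) := by
  unfold beta
  push_cast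
  split_ifs with h1 h2
  · constructor
    · intro h; exact absurd h.symm bot_ne_top
    · intro h
      exact absurd (h1.trans h) (by rw [finVal_lt]; omega)
  · simp [h2]
  · constructor
    · intro hm
      obtain ⟨k, rfl⟩ := exists_finVal (x := x)
        (fun hb => h2 (by rw [hb]; exact bot_lt_finVal _))
        (fun ht => h1 (by rw [ht]; exact finVal_lt_top _))
      rw [map_finVal] at hm
      exact absurd hm (finVal_ne_bot _)
    · intro h; exact absurd h h2

lemma refH_finVal (n : ℤ) : refH (finVal n) = n := by
  rw [refH, if_neg (by simp [finVal_ne_bot, finVal_ne_top]), valZ_finVal]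

/-- Explicit form of the local rule of `S^r` at a finite position of height `n`. -/
noncomputable def lamE (c : Config) (i n : ℤ) : ℤ :=
  if finVal (n+1) < c (i-1) ∧ ¬(c (i+1) < finVal (n-1)) then -1
  else if ¬(finVal (n+1) < c (i-1)) ∧ c (i+1) < finVal (n-1) then 1
  else 0

lemma nbhd_zero (c : Config) (i : ℤ) : nbhd 1 c i 0 = beta 1 (refH (c i)) (c (i - 1)) := by
  show beta 1 (refH (c i)) (c (i + _)) = _
  norm_num [nbhd]
  ring_nf

lemma nbhd_one (c : Config) (i : ℤ) : nbhd 1 c i 1 = beta 1 (refH (c i)) (c (i + 1)) := by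
  show beta 1 (refH (c i)) (c (i + _)) = _
  norm_num [nbhd]

lemma lamSr_eq (c : Config) (i n : ℤ) (h : c i = finVal n) :
    lamSr (nbhd 1 c i) = lamE c i n := by
  have h0 : nbhd 1 c i 0 = beta 1 n (c (i - 1)) := by rw [nbhd_zero, h, refH_finVal]
  have h1 : nbhd 1 c i 1 = beta 1 n (c (i + 1)) := by rw [nbhd_one, h, refH_finVal]
  show (if nbhd 1 c i 0 = ⊤ ∧ nbhd 1 c i 1 ≠ ⊥ then -1
    else if nbhd 1 c i 0 ≠ ⊤ ∧ nbhd 1 c i 1 = ⊥ then 1 else 0) = lamE c i n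
  rw [h0, h1, lamE]
  simp only [ne_eq, beta_eq_top, beta_eq_bot]

lemma globalF_finVal (c : Config) (i n : ℤ) (h : c i = finVal n) :
    globalF 1 lamSr c i = finVal (n + lamE c i n) := by
  rw [globalF, if_neg (by simp [h, finVal_ne_bot, finVal_ne_top]),
    lamSr_eq c i n h, h, valZ_finVal]

lemma lamE_bounds (c : Config) (i n : ℤ) : -1 ≤ lamE c i n ∧ lamE c i n ≤ 1 := by
  rw [lamE]; split_ifs <;> omega

lemma lamE_spec (c : Config) (i n : ℤ) :
    (lamE c i n = -1 ∧ (finVal (n+1) < c (i-1) ∧ ¬(c (i+1) < finVal (n-1)))) ∨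
    (lamE c i n = 1 ∧ (¬(finVal (n+1) < c (i-1)) ∧ c (i+1) < finVal (n-1))) ∨
    (lamE c i n = 0 ∧ ((finVal (n+1) < c (i-1) ∧ c (i+1) < finVal (n-1)) ∨
      (¬(finVal (n+1) < c (i-1)) ∧ ¬(c (i+1) < finVal (n-1))))) := by
  rw [lamE]
  split_ifs with h1 h2
  · exact Or.inl ⟨rfl, h1⟩
  · exact Or.inr (Or.inl ⟨rfl, h2⟩)
  · exact Or.inr (Or.inr ⟨rfl, by tauto⟩)

lemma lamE_eq_neg_one {c : Config} {i n : ℤ} (h : lamE c i n = -1) :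
    finVal (n+1) < c (i-1) ∧ ¬(c (i+1) < finVal (n-1)) := by
  rcases lamE_spec c i n with ⟨e, he⟩ | ⟨e, he⟩ | ⟨e, he⟩
  · exact he
  · omega
  · omega

lemma lamE_eq_one {c : Config} {i n : ℤ} (h : lamE c i n = 1) :
    ¬(finVal (n+1) < c (i-1)) ∧ c (i+1) < finVal (n-1) := by
  rcases lamE_spec c i n with ⟨e, he⟩ | ⟨e, he⟩ | ⟨e, he⟩
  · omega
  · exact he
  · omega

lemma lamE_eq_zero {c : Config} {i n : ℤ} (h : lamE c i n = 0) :
    (finVal (n+1) < c (i-1) ∧ c (i+1) < finVal (n-1)) ∨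
    (¬(finVal (n+1) < c (i-1)) ∧ ¬(c (i+1) < finVal (n-1))) := by
  rcases lamE_spec c i n with ⟨e, he⟩ | ⟨e, he⟩ | ⟨e, he⟩
  · omega
  · omega
  · exact he

section Main

variable {c c' : Config}

lemma globalF_bot (c : Config) (i : ℤ) : globalF 1 lamSr c i = ⊥ ↔ c i = ⊥ := by
  rw [globalF]
  split_ifs with hc
  · rcases hc with hc | hc <;> simp [hc]
  · simp [finVal_ne_bot]
    tauto

lemma globalF_top (c : Config) (i : ℤ) : globalF 1 lamSr c i = ⊤ ↔ c i = ⊤ := by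
  rw [globalF]
  split_ifs with hc
  · rcases hc with hc | hc <;> simp [hc]
  · simp [finVal_ne_top]
    tauto

variable (h : ∀ i, globalF 1 lamSr c i = globalF 1 lamSr c' i)
include h

lemma bot_iff (i : ℤ) : c i = ⊥ ↔ c' i = ⊥ := by
  rw [← globalF_bot c i, ← globalF_bot c' i, h i]

lemma top_iff (i : ℤ) : c i = ⊤ ↔ c' i = ⊤ := by
  rw [← globalF_top c i, ← globalF_top c' i, h i]

lemma key_eq {i n n' : ℤ} (hn : c i = finVal n) (hn' : c' i = finVal n') :
    n + lamE c i n = n' + lamE c' i n' := by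
  have := h i
  rw [globalF_finVal c i n hn, globalF_finVal c' i n' hn'] at this
  exact finVal_inj.1 this

lemma bound {i n n' : ℤ} (hn : c i = finVal n) (hn' : c' i = finVal n') :
    n - n' ≤ 2 := by
  have := key_eq h hn hn'
  have b1 := lamE_bounds c i n
  have b2 := lamE_bounds c' i n'
  omega

/-- If `c j ≥ a` and `c' j ≤ b`, derive `a - b ≤ K` from a per-site bound `K`. -/
lemma neigh (K : ℤ) (hK : ∀ (j a b : ℤ), c j = finVal a → c' j = finVal b → a - b ≤ K)
    {j a b : ℤ} (h1 : finVal a ≤ c j) (h2 : c' j ≤ finVal b) : a - b ≤ K := by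
  have hcb : c j ≠ ⊥ := by
    intro e; rw [e, le_bot_iff] at h1; exact finVal_ne_bot a h1
  have hc't : c' j ≠ ⊤ := by
    intro e; rw [e, top_le_iff] at h2; exact finVal_ne_top b h2
  have hct : c j ≠ ⊤ := fun e => hc't ((top_iff h j).1 e)
  have hc'b : c' j ≠ ⊥ := fun e => hcb ((bot_iff h j).2 e)
  obtain ⟨m, hm⟩ := exists_finVal hcb hct
  obtain ⟨m', hm'⟩ := exists_finVal hc'b hc't
  rw [hm] at h1; rw [hm'] at h2
  rw [finVal_le] at h1 h2
  have := hK j m m' hm hm'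
  omega

lemma lt2 {i n n' : ℤ} (hn : c i = finVal n) (hn' : c' i = finVal n') :
    n - n' ≤ 1 := by
  by_contra hc
  have h2 : n - n' = 2 := by have := bound h hn hn'; omega
  have hk := key_eq h hn hn'
  have b1 := lamE_bounds c i n
  have b2 := lamE_bounds c' i n'
  have hl : lamE c i n = -1 := by omega
  have hl' : lamE c' i n' = 1 := by omega
  have hA := (lamE_eq_neg_one hl).1
  have hA' := (lamE_eq_one hl').1
  rw [finVal_lt_iff] at hA
  rw [not_lt] at hA'
  have := neigh h 2 (fun j a b => bound h) hA hA'
  omega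

lemma no1 {i n n' : ℤ} (hn : c i = finVal n) (hn' : c' i = finVal n') :
    n ≠ n' + 1 := by
  intro he
  have hk := key_eq h hn hn'
  have b1 := lamE_bounds c i n
  have b2 := lamE_bounds c' i n'
  have hneigh : ∀ {j a b : ℤ}, finVal a ≤ c j → c' j ≤ finVal b → a - b ≤ 1 :=
    fun h1 h2 => neigh h 1 (fun j a b hja hjb => lt2 h hja hjb) h1 h2
  rcases (by omega : (lamE c i n = -1 ∧ lamE c' i n' = 0) ∨
      (lamE c i n = 0 ∧ lamE c' i n' = 1)) with ⟨hl, hl'⟩ | ⟨hl, hl'⟩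
  · obtain ⟨hA, hB⟩ := lamE_eq_neg_one hl
    rcases lamE_eq_zero hl' with ⟨hA', hB'⟩ | ⟨hA', hB'⟩
    · rw [not_lt] at hB
      rw [lt_finVal_iff] at hB'
      have := hneigh hB hB'
      omega
    · rw [finVal_lt_iff] at hA
      rw [not_lt] at hA'
      have := hneigh hA hA'
      omega
  · obtain ⟨hA', hB'⟩ := lamE_eq_one hl'
    rcases lamE_eq_zero hl with ⟨hA, hB⟩ | ⟨hA, hB⟩
    · rw [finVal_lt_iff] at hA
      rw [not_lt] at hA'
      have := hneigh hA hA'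
      omega
    · rw [not_lt] at hB
      rw [lt_finVal_iff] at hB'
      have := hneigh hB hB'
      omega

end Main

lemma injective : Function.Injective (globalF 1 lamSr) := by
  intro c c' heq
  have h : ∀ i, globalF 1 lamSr c i = globalF 1 lamSr c' i := fun i => congrFun heq i
  have h' : ∀ i, globalF 1 lamSr c' i = globalF 1 lamSr c i := fun i => (h i).symm
  funext i
  by_cases hb : c i = ⊥
  · rw [hb, ((bot_iff h i).1 hb).symm]
  · by_cases ht : c i = ⊤
    · rw [ht, ((top_iff h i).1 ht).symm]
    · have hb' : c' i ≠ ⊥ := fun e => hb ((bot_iff h i).2 e)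
      have ht' : c' i ≠ ⊤ := fun e => ht ((top_iff h i).2 e)
      obtain ⟨n, hn⟩ := exists_finVal hb ht
      obtain ⟨n', hn'⟩ := exists_finVal hb' ht'
      have l1 := lt2 h hn hn'
      have l2 := lt2 h' hn' hn
      have l3 := no1 h hn hn'
      have l4 := no1 h' hn' hn
      rw [hn, hn', finVal_inj]
      omega

end SrAux

/-- `f_{S^r}` is injective, `F`-injective and `P`-injective. -/
theorem Sr_injective :
    Function.Injective (globalF 1 lamSr) ∧
    Set.InjOn (globalF 1 lamSr) {c : Config | FiniteConf c} ∧
    Set.InjOn (globalF 1 lamSr) {c : Config | PeriodicConf c} :=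
  ⟨SrAux.injective, SrAux.injective.injOn, SrAux.injective.injOn⟩
end

section
/- For every d-dimensional sand automaton, F-surjectivity implies surjectivity: if every finite configuration has a finite preimage under the global function f, then every configuration has a preimage under f. -/
/-- `d`-dimensional sandpile configurations. -/
def ConfigD (d : ℕ) : Type := (Fin d → ℤ) → EZ

/-- The index set of a `d`-dimensional neighborhood of radius `r`: the nonzero
vectors `v ∈ [-r, r]^d`. -/
def NIdx (d r : ℕ) : Type := {v : Fin d → ℤ // (∀ j, |v j| ≤ (r : ℤ)) ∧ v ≠ 0}

/-- The neighborhood tuple `d_r^i(c) = (β_r^{c_i}(c_{i+v}))_{v ∈ [-r,r]^d, v ≠ 0}`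
(with reference height `0` when `c_i = ±∞`). -/
noncomputable def nbhdD (d r : ℕ) (c : ConfigD d) (i : Fin d → ℤ) : NIdx d r → EZ :=
  fun v => beta r (refH (c i)) (c (fun t => i t + v.1 t))

/-- The global function of the `d`-dimensional sand automaton of radius `r`
with local rule `lam`. -/
noncomputable def globalD (d r : ℕ) (lam : (NIdx d r → EZ) → ℤ) (c : ConfigD d) : ConfigD d :=
  fun i => if c i = ⊥ ∨ c i = ⊤ then c i
    else finVal (valZ (c i) + lam (nbhdD d r c i))

/-- Finite `d`-dimensional configurations: `c_i = 0` whenever the infinity norm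
`|i| = max_j |i_j|` is at least some `k`. -/
def FiniteD {d : ℕ} (c : ConfigD d) : Prop :=
  ∃ k : ℕ, ∀ i : Fin d → ℤ, (∃ j, (k : ℤ) ≤ |i j|) → c i = finVal 0

/-- Periodic `d`-dimensional configurations: invariant under translation by `p · e_j`
for some integer `p ≥ 1` and every standard basis vector `e_j`. -/
def PeriodicD {d : ℕ} (c : ConfigD d) : Prop :=
  ∃ p : ℤ, 1 ≤ p ∧ ∀ (i : Fin d → ℤ) (j : Fin d),
    c (fun t => i t + if t = j then p else 0) = c i

-- AUX

open Filter

lemma finVal_ne_bot_s14 (k : ℤ) : finVal k ≠ ⊥ := WithBot.coe_ne_bot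

lemma finVal_ne_top_s14 (k : ℤ) : finVal k ≠ ⊤ := by
  simp [finVal]

lemma valZ_finVal (k : ℤ) : valZ (finVal k) = k := rfl

lemma refH_finVal (k : ℤ) : refH (finVal k) = k := by
  simp [refH, finVal_ne_bot_s14, finVal_ne_top_s14, valZ_finVal]

lemma eq_finVal_of_ne (x : EZ) (hb : x ≠ ⊥) (ht : x ≠ ⊤) : x = finVal (valZ x) := by
  rcases x with _ | y
  · exact absurd rfl hb
  · rcases y with _ | k
    · exact absurd rfl ht
    · rfl

instance nidx_finite (d r : ℕ) : Finite (NIdx d r) := by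
  have h : {v : Fin d → ℤ | (∀ j, |v j| ≤ (r : ℤ)) ∧ v ≠ 0}.Finite := by
    apply Set.Finite.subset (Set.Finite.pi (fun _ : Fin d => Set.finite_Icc (-(r:ℤ)) r))
    intro v hv
    intro j _
    exact abs_le.mp (hv.1 j)
  exact h.to_subtype

lemma globalD_local (d r : ℕ) (lam : (NIdx d r → EZ) → ℤ) (c₁ c₂ : ConfigD d)
    (i : Fin d → ℤ) (h0 : c₁ i = c₂ i)
    (h1 : ∀ v : NIdx d r, c₁ (fun t => i t + v.1 t) = c₂ (fun t => i t + v.1 t)) :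
    globalD d r lam c₁ i = globalD d r lam c₂ i := by
  have hn : nbhdD d r c₁ i = nbhdD d r c₂ i := by
    funext v
    simp only [nbhdD, h0, h1 v]
  simp only [globalD, h0, hn]

lemma exists_ultra {α β : Type*} (U : Ultrafilter α) (S : Finset β) (g : α → β)
    (h : ∀ᶠ n in (U : Filter α), g n ∈ S) : ∃ x, ∀ᶠ n in (U : Filter α), g n = x := by
  by_contra hc
  push_neg at hc
  have h2 : ∀ x ∈ S, ∀ᶠ n in (U : Filter α), g n ≠ x :=
    fun x _ => hc x
  have h3 : ∀ᶠ n in (U : Filter α), ∀ x ∈ S, g n ≠ x :=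
    (Filter.eventually_all_finset S).mpr h2
  obtain ⟨n, hn1, hn2⟩ := (h.and h3).exists
  exact hn2 _ hn1 rfl

/-- For every `d`-dimensional sand automaton (dimension `d ≥ 1`, radius `r ≥ 1`, local
rule `lam` taking values in `[-r, r]`), `F`-surjectivity implies surjectivity: if every
finite configuration has a finite preimage under the global function, then every
configuration has a preimage. -/
theorem F_surjective_implies_surjective
    (d r : ℕ) (hd : 1 ≤ d) (hr : 1 ≤ r)
    (lam : (NIdx d r → EZ) → ℤ)
    (hlam : ∀ v, -(r : ℤ) ≤ lam v ∧ lam v ≤ (r : ℤ))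
    (hFsurj : ∀ c : ConfigD d, FiniteD c → ∃ c', FiniteD c' ∧ globalD d r lam c' = c) :
    Function.Surjective (globalD d r lam) := by
  classical
  intro c
  -- truncations
  set cN : ℕ → ConfigD d := fun n j => if ∀ t, |j t| < (n : ℤ) then c j else finVal 0 with hcN
  have hNfin : ∀ n, FiniteD (cN n) := by
    intro n
    refine ⟨n, fun i ⟨j, hj⟩ => ?_⟩
    simp only [hcN]
    rw [if_neg]
    push_neg
    exact ⟨j, hj⟩
  choose cP hPfin hPglob using fun n => hFsurj (cN n) (hNfin n)
  -- ultrafilter extending cofinite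
  let U : Ultrafilter ℕ := Filter.hyperfilter ℕ
  have hU : ∀ A : Set ℕ, Aᶜ.Finite → A ∈ U := fun A h =>
    Filter.hyperfilter_le_cofinite (Filter.mem_cofinite.mpr h)
  -- the set of large n for a site i
  have hbig : ∀ i : Fin d → ℤ, ∀ᶠ n : ℕ in (U : Filter ℕ), ∀ t, |i t| < (n : ℤ) := by
    intro i
    apply hU
    have : {n : ℕ | ∀ t, |i t| < (n : ℤ)}ᶜ ⊆ Set.Iic (Finset.univ.sup fun t => (|i t|).toNat) := by
      intro n hn
      simp only [Set.mem_compl_iff, Set.mem_setOf_eq, not_forall, not_lt] at hn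
      obtain ⟨t, ht⟩ := hn
      have h1 : n ≤ (|i t|).toNat := by
        omega
      exact h1.trans (Finset.le_sup (f := fun t => (|i t|).toNat) (Finset.mem_univ t))
    exact Set.Finite.subset (Set.finite_Iic _) this
  have hcNeq : ∀ (n : ℕ) (i : Fin d → ℤ), (∀ t, |i t| < (n : ℤ)) → cN n i = c i := by
    intro n i h
    simp only [hcN]
    rw [if_pos h]
  -- eventual finite range of cP n i
  have hmem : ∀ i : Fin d → ℤ, ∀ᶠ n in (U : Filter ℕ),
      cP n i ∈ insert (⊥ : EZ) (insert (⊤ : EZ)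
        ((Finset.Icc (refH (c i) - r) (refH (c i) + r)).image finVal)) := by
    intro i
    filter_upwards [hbig i] with n hn
    by_cases hb : cP n i = ⊥
    · simp [hb]
    by_cases ht : cP n i = ⊤
    · simp [ht]
    · have hrep := eq_finVal_of_ne _ hb ht
      have hg : globalD d r lam (cP n) i = c i := by
        rw [hPglob n]; exact hcNeq n i hn
      rw [globalD, if_neg (by tauto)] at hg
      have hvz : refH (c i) = valZ (cP n i) + lam (nbhdD d r (cP n) i) := by
        rw [← hg, refH_finVal]
      have hbnd := hlam (nbhdD d r (cP n) i)
      refine Finset.mem_insert.mpr (Or.inr (Finset.mem_insert.mpr (Or.inr ?_)))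
      refine Finset.mem_image.mpr ⟨valZ (cP n i), ?_, hrep.symm⟩
      rw [Finset.mem_Icc]
      omega
  -- the limit configuration
  have hch : ∀ i : Fin d → ℤ, ∃ x : EZ, ∀ᶠ n in (U : Filter ℕ), cP n i = x :=
    fun i => exists_ultra U _ _ (hmem i)
  choose c' hc' using hch
  refine ⟨c', funext fun i => ?_⟩
  have hEv : ∀ᶠ n : ℕ in (U : Filter ℕ), (∀ t, |i t| < (n : ℤ)) ∧ cP n i = c' i ∧
      ∀ v : NIdx d r, cP n (fun t => i t + v.1 t) = c' (fun t => i t + v.1 t) :=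
    (hbig i).and ((hc' i).and (Filter.eventually_all.mpr fun v => hc' _))
  obtain ⟨n, h1, h2, h3⟩ := hEv.exists
  have hloc : globalD d r lam c' i = globalD d r lam (cP n) i :=
    globalD_local d r lam c' (cP n) i h2.symm (fun v => (h3 v).symm)
  rw [hloc, hPglob n]
  exact hcNeq n i h1
end
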